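/- For every real α and positive integer n, det(αA_n + (1−α)Â_n) = − Π_{γ ∈ Comp^B(n)} m_γ(α), where for a signed composition γ with part sizes γ₁,...,γ_k, m_γ(α) = 2^{k/2}·(αγ₁ + (1−α))·Π_{i=2}^{k} γ_i. -/

import Mathlib

open Finset

/-- The first sign (`true` = barred = `−`) appearing in a list of optional signs. -/
def firstSign (l : List (Option Bool)) : Bool :=
  (l.filterMap id).headI

/-- Whether the `some` entries of a list form a prefix (no `some` after a `none`). -/
def somesArePrefix (l : List (Option Bool)) : Bool :=
  (l.dropWhile fun o => o.isSome).all fun o => o.isNone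

/-- The weight `wt_γ(σ)` of a signed set `σ` (encoded as a word `l` over
`{0,1,*} = Option Bool`) with respect to a signed composition `γ`:
`wt_γ(σ) = 0` unless `S(σ)` is unimodal with respect to the underlying composition of
`γ` and the sign vector `ε̃` of `σ` is constant on each block of `γ`; otherwise
`wt_γ(σ) = (−1)^{|S(σ) \ S(γ)| + n_γ(σ)}`, where `n_γ(σ)` is the number of blocks on
which both `γ` and `σ` assign the negative sign. -/
def wt : List (ℕ × Bool) → List (Option Bool) → ℤ
  | [], l => if l.isEmpty then 1 else 0
  | (a, b) :: t, l =>
      let blk := l.take a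
      let inner := blk.take (a - 1)
      let sgn := firstSign l
      if somesArePrefix inner
          && ((List.range blk.length).all fun j => firstSign (l.drop j) == sgn) then
        (-1 : ℤ) ^ ((inner.filterMap id).length + (if b && sgn then 1 else 0))
          * wt t (l.drop a)
      else 0

/-- Decoding of a word over `{0,1,*}` (with last letter not `*`) into the signed
composition it encodes. -/
def compOfWord : List (Option Bool) → List (ℕ × Bool)
  | [] => []
  | none :: t =>
      match compOfWord t with
      | [] => []
      | (a, b) :: r => (a + 1, b) :: r
  | some b :: t => (1, b) :: compOfWord t

/-- The set `Σ^B(n+1)` of signed sets, encoded as words of length `n+1` over `{0,1,*}`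
whose last letter is not `*`. -/
def SignedSetWord (n : ℕ) : Type :=
  { w : Fin (n + 1) → Option Bool // w (Fin.last n) ≠ none }

noncomputable instance (n : ℕ) : Fintype (SignedSetWord n) := by
  unfold SignedSetWord; infer_instance

instance (n : ℕ) : DecidableEq (SignedSetWord n) := by
  unfold SignedSetWord; infer_instance

/-- The weight matrix `A_{n+1}`, with rows indexed by signed compositions of `n+1`
(encoded as words) and columns by signed sets in `Σ^B(n+1)`, whose `(γ, σ)` entry is
`wt_γ(σ)`. -/
def weightMatrix (n : ℕ) : Matrix (SignedSetWord n) (SignedSetWord n) ℤ :=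
  Matrix.of fun γ σ => wt (compOfWord (List.ofFn γ.1)) (List.ofFn σ.1)

/-- The length of the initial run of `*`-s in a word. -/
def starRun {n : ℕ} (w : SignedSetWord n) : ℕ :=
  ((List.ofFn w.1).takeWhile fun o => o.isNone).length

/-- The matrix `Â_{n+1}`, obtained from `A_{n+1}` by setting to zero all entries
`(γ, σ)` for which the initial `*`-run of the row word is longer than that of the
column word. -/
def weightMatrixHat (n : ℕ) : Matrix (SignedSetWord n) (SignedSetWord n) ℤ :=
  Matrix.of fun γ σ => if starRun σ < starRun γ then 0 else weightMatrix n γ σ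

/-- `A_{n+1}` as a real matrix. -/
noncomputable def weightMatrixR (n : ℕ) : Matrix (SignedSetWord n) (SignedSetWord n) ℝ :=
  Matrix.of fun γ σ => ((weightMatrix n γ σ : ℤ) : ℝ)

/-- `Â_{n+1}` as a real matrix. -/
noncomputable def weightMatrixHatR (n : ℕ) :
    Matrix (SignedSetWord n) (SignedSetWord n) ℝ :=
  Matrix.of fun γ σ => ((weightMatrixHat n γ σ : ℤ) : ℝ)

/-- The list of (absolute) part sizes of the signed composition encoded by the word `γ`. -/
def partSizes {n : ℕ} (γ : SignedSetWord n) : List ℕ :=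
  (compOfWord (List.ofFn γ.1)).map Prod.fst



def srl (l : List (Option Bool)) : ℕ := (l.takeWhile fun o => o.isNone).length

lemma firstSign_some (c : Bool) (t : List (Option Bool)) : firstSign (some c :: t) = c := by
  simp [firstSign]

lemma firstSign_none (t : List (Option Bool)) : firstSign (none :: t) = firstSign t := by
  simp [firstSign]

lemma somesArePrefix_some (c : Bool) (t : List (Option Bool)) :
    somesArePrefix (some c :: t) = somesArePrefix t := by
  simp [somesArePrefix, List.dropWhile]

lemma somesArePrefix_none (t : List (Option Bool)) :
    somesArePrefix (none :: t) = t.all fun o => o.isNone := by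
  simp [somesArePrefix, List.dropWhile]

lemma somesArePrefix_nil : somesArePrefix [] = true := rfl

lemma srl_some (c : Bool) (t : List (Option Bool)) : srl (some c :: t) = 0 := by
  simp [srl, List.takeWhile]

lemma srl_none (t : List (Option Bool)) : srl (none :: t) = srl t + 1 := by
  simp [srl, List.takeWhile]

lemma compOfWord_some (c : Bool) (t : List (Option Bool)) :
    compOfWord (some c :: t) = (1, c) :: compOfWord t := rfl

lemma compOfWord_none (t : List (Option Bool)) (p : ℕ) (s : Bool) (r : List (ℕ × Bool))
    (h : compOfWord t = (p, s) :: r) : compOfWord (none :: t) = (p + 1, s) :: r := by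
  simp [compOfWord, h]

lemma compOfWord_struct : ∀ (l : List (Option Bool)), srl l < l.length →
    ∃ s r, compOfWord l = (srl l + 1, s) :: r
  | [], h => by simp at h
  | some c :: t, _ => ⟨c, compOfWord t, by simp [compOfWord_some, srl_some]⟩
  | none :: t, h => by
      rw [srl_none] at h ⊢
      simp only [List.length_cons] at h
      obtain ⟨s, r, hr⟩ := compOfWord_struct t (by omega)
      exact ⟨s, r, by rw [compOfWord_none t _ s r hr]⟩

lemma take_all_isNone_iff : ∀ (l : List (Option Bool)) (k : ℕ), k ≤ l.length →
    (((l.take k).all fun o => o.isNone) = true ↔ k ≤ srl l)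
  | l, 0, _ => by simp
  | [], k + 1, h => by simp at h
  | none :: t, k + 1, h => by
      simp only [List.take_succ_cons, List.all_cons, Option.isNone_none, Bool.true_and,
        srl_none]
      rw [take_all_isNone_iff t k (by simpa using h)]
      omega
  | some c :: t, k + 1, h => by
      simp [srl_some]

lemma somesArePrefix_of_all_isNone (l : List (Option Bool))
    (h : (l.all fun o => o.isNone) = true) : somesArePrefix l = true := by
  simp only [List.all_eq_true] at h
  simp only [somesArePrefix, List.all_eq_true]
  intro o ho
  exact h o ((List.dropWhile_sublist _).subset ho)

lemma range_all_succ (k : ℕ) (f : ℕ → Bool) :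
    (List.range (k + 1)).all f = (f 0 && (List.range k).all fun j => f (j + 1)) := by
  rw [List.range_succ_eq_map]
  simp [List.all_map, Function.comp]
  rfl
lemma wt_cons (a : ℕ) (b : Bool) (t : List (ℕ × Bool)) (l : List (Option Bool)) :
    wt ((a, b) :: t) l =
      if somesArePrefix (l.take (a - 1))
          && ((List.range (l.take a).length).all fun j => firstSign (l.drop j) == firstSign l) then
        (-1 : ℤ) ^ (((l.take (a - 1)).filterMap id).length + (if b && firstSign l then 1 else 0))
          * wt t (l.drop a)
      else 0 := by
  simp only [wt, List.take_take, Nat.min_eq_left (Nat.sub_le a 1)]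

lemma wt_cons_some (b : Bool) (l' m' : List (Option Bool)) (s : Option Bool) :
    wt (compOfWord (some b :: l')) (s :: m')
      = (-1 : ℤ) ^ (if b && firstSign (s :: m') then 1 else 0) * wt (compOfWord l') m' := by
  rw [compOfWord_some, wt_cons]
  simp [somesArePrefix_nil]

lemma wt_cons_none_some (l' m' : List (Option Bool)) (c : Bool) (p : ℕ) (b : Bool)
    (r : List (ℕ × Bool)) (hl : compOfWord l' = (p + 1, b) :: r) (hm : m' ≠ []) :
    wt (compOfWord (none :: l')) (some c :: m')
      = (if firstSign m' = c then -1 else 0) * wt (compOfWord l') m' := by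
  rw [compOfWord_none l' _ b r hl, hl, wt_cons, wt_cons]
  by_cases hc : firstSign m' = c
  · subst hc
    simp only [Nat.add_sub_cancel, List.take_succ_cons, somesArePrefix_some, List.length_cons,
      range_all_succ, List.drop_zero, beq_self_eq_true, Bool.true_and, List.drop_succ_cons,
      firstSign_some, List.filterMap_cons, List.length_cons, if_pos trivial, id]
    split
    · rw [show (List.filterMap (fun x => x) (m'.take p)).length + 1 +
        (if b && firstSign m' then 1 else 0) =
        ((List.filterMap (fun x => x) (m'.take p)).length + (if b && firstSign m' then 1 else 0)) + 1
        by omega, pow_succ]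
      ring
    · ring
  · rw [if_neg hc, if_neg]
    · ring
    · intro h
      rw [Bool.and_eq_true, List.all_eq_true] at h
      have hm0 : 0 < m'.length := List.length_pos_iff.mpr hm
      have h1 : (1 : ℕ) ∈ List.range ((some c :: m').take (p + 1 + 1)).length := by
        simp only [List.take_succ_cons, List.length_cons, List.mem_range, List.length_take]
        omega
      have := h.2 1 h1
      rw [List.drop_one, List.tail_cons, firstSign_some, beq_iff_eq] at this
      exact hc this

lemma wt_cons_none_none (l' m' : List (Option Bool)) (p : ℕ) (b : Bool)
    (r : List (ℕ × Bool)) (hl : compOfWord l' = (p + 1, b) :: r) (hp : p < m'.length) :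
    wt (compOfWord (none :: l')) (none :: m')
      = if srl m' < p then 0 else wt (compOfWord l') m' := by
  rw [compOfWord_none l' _ b r hl, hl, wt_cons, wt_cons]
  by_cases hsr : srl m' < p
  · rw [if_pos hsr, if_neg]
    intro h
    rw [Bool.and_eq_true] at h
    have h1 := h.1
    rw [Nat.add_sub_cancel, List.take_succ_cons, somesArePrefix_none] at h1
    rw [take_all_isNone_iff m' p hp.le] at h1
    omega
  · rw [if_neg hsr]
    have hall : ((m'.take p).all fun o => o.isNone) = true :=
      (take_all_isNone_iff m' p hp.le).2 (not_lt.1 hsr)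
    have hsp := somesArePrefix_of_all_isNone _ hall
    simp only [Nat.add_sub_cancel, List.take_succ_cons, somesArePrefix_none, hall, hsp,
      List.length_cons, range_all_succ, List.drop_zero, beq_self_eq_true, Bool.true_and,
      List.drop_succ_cons, firstSign_none, List.filterMap_cons, id]
lemma srl_le_length (l : List (Option Bool)) : srl l ≤ l.length :=
  List.Sublist.length_le (List.takeWhile_sublist _)

lemma all_none_of_srl_eq_length : ∀ (l : List (Option Bool)), srl l = l.length →
    ∀ x ∈ l, x = none
  | [], _, x, hx => by simp at hx
  | some c :: t, h, x, hx => by rw [srl_some] at h; simp at h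
  | none :: t, h, x, hx => by
      rw [srl_none] at h
      simp only [List.length_cons, Nat.add_right_cancel_iff] at h
      rcases List.mem_cons.1 hx with rfl | hx'
      · rfl
      · exact all_none_of_srl_eq_length t h x hx'

lemma srl_lt_ofFn {n : ℕ} (w : SignedSetWord n) : srl (List.ofFn w.1) < n + 1 := by
  have h1 : srl (List.ofFn w.1) ≤ n + 1 := by
    simpa using srl_le_length (List.ofFn w.1)
  rcases lt_or_eq_of_le h1 with h | h
  · exact h
  · exfalso
    apply w.2
    exact all_none_of_srl_eq_length (List.ofFn w.1) (by simpa using h) _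
      (List.mem_ofFn.2 ⟨Fin.last n, rfl⟩)

lemma word_struct {n : ℕ} (w : SignedSetWord n) :
    ∃ s r, compOfWord (List.ofFn w.1) = (srl (List.ofFn w.1) + 1, s) :: r :=
  compOfWord_struct _ (by rw [List.length_ofFn]; exact srl_lt_ofFn w)

def consW {n : ℕ} (g : Option Bool) (w : SignedSetWord n) : SignedSetWord (n + 1) :=
  ⟨Fin.cons g w.1, by
    rw [← Fin.succ_last, Fin.cons_succ]
    exact w.2⟩

lemma ofFn_consW {n : ℕ} (g : Option Bool) (w : SignedSetWord n) :
    List.ofFn (consW g w).1 = g :: List.ofFn w.1 := by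
  simp [consW, List.ofFn_succ]

def tailW {n : ℕ} (v : SignedSetWord (n + 1)) : SignedSetWord n :=
  ⟨Fin.tail v.1, by
    show v.1 (Fin.last n).succ ≠ none
    rw [Fin.succ_last]
    exact v.2⟩

lemma tailW_consW {n : ℕ} (g : Option Bool) (w : SignedSetWord n) : tailW (consW g w) = w := by
  apply Subtype.ext
  simp [tailW, consW]

lemma consW_fst_zero {n : ℕ} (g : Option Bool) (w : SignedSetWord n) : (consW g w).1 0 = g := by
  simp [consW]

lemma consW_tailW {n : ℕ} (v : SignedSetWord (n + 1)) : consW (v.1 0) (tailW v) = v := by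
  apply Subtype.ext
  simp [consW, tailW]

def splitE (n : ℕ) : (SignedSetWord n ⊕ (SignedSetWord n ⊕ SignedSetWord n)) ≃ SignedSetWord (n + 1) where
  toFun x := Sum.elim (fun w => consW none w)
    (Sum.elim (fun w => consW (some false) w) (fun w => consW (some true) w)) x
  invFun v :=
    if v.1 0 = none then Sum.inl (tailW v)
    else if v.1 0 = some false then Sum.inr (Sum.inl (tailW v))
    else Sum.inr (Sum.inr (tailW v))
  left_inv x := by
    rcases x with w | w | w <;>
      simp [consW_fst_zero, tailW_consW]
  right_inv v := by
    rcases hv : v.1 0 with _ | c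
    · simp only [hv]
      simp only [Option.some.injEq, Bool.true_eq_false, Bool.false_eq_true, reduceCtorEq, reduceIte, Sum.elim_inl]
      conv_rhs => rw [← consW_tailW v, hv]
    · cases c
      · simp only [hv]
        simp only [Option.some.injEq, Bool.true_eq_false, Bool.false_eq_true, reduceCtorEq, reduceIte, Sum.elim_inr, Sum.elim_inl]
        conv_rhs => rw [← consW_tailW v, hv]
      · simp only [hv]
        simp only [Option.some.injEq, Bool.true_eq_false, Bool.false_eq_true, reduceCtorEq, reduceIte, Sum.elim_inr]
        conv_rhs => rw [← consW_tailW v, hv]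

def lastSplit (n : ℕ) : SignedSetWord n ≃ (Fin n → Option Bool) × Bool where
  toFun w := (fun i => w.1 i.castSucc, (w.1 (Fin.last n)).getD false)
  invFun x := ⟨Fin.snoc x.1 (some x.2), by simp⟩
  left_inv w := by
    apply Subtype.ext
    funext i
    induction i using Fin.lastCases with
    | last =>
        simp only [Fin.snoc_last]
        rcases h : w.1 (Fin.last n) with _ | b
        · exact absurd h w.2
        · simp [h]
    | cast j => simp only [Fin.snoc_castSucc]
  right_inv x := by
    refine Prod.ext ?_ ?_
    · funext i
      simp
    · simp

lemma even_card_word (n : ℕ) : Even (Fintype.card (SignedSetWord n)) := by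
  rw [Fintype.card_congr (lastSplit n)]
  rw [Fintype.card_prod, Fintype.card_bool]
  exact even_two.mul_left _

def baseEquiv : Bool ≃ SignedSetWord 0 where
  toFun c := ⟨fun _ => some c, by simp⟩
  invFun w := (w.1 0).getD false
  left_inv c := by simp
  right_inv w := by
    apply Subtype.ext
    funext i
    have h0 : i = Fin.last 0 := Fin.ext (by omega)
    subst h0
    rcases h : w.1 (Fin.last 0) with _ | b
    · exact absurd h w.2
    · have h' : w.1 0 = some b := h
      simp [h']
lemma ofFn_ne_nil {n : ℕ} (w : SignedSetWord n) : List.ofFn w.1 ≠ [] := by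
  apply List.ne_nil_of_length_pos
  simp

lemma starRun_def {n : ℕ} (w : SignedSetWord n) : starRun w = srl (List.ofFn w.1) := rfl

lemma wR_apply {n : ℕ} (γ σ : SignedSetWord n) :
    weightMatrixR n γ σ = ((wt (compOfWord (List.ofFn γ.1)) (List.ofFn σ.1) : ℤ) : ℝ) := rfl

lemma hatwR_apply {n : ℕ} (γ σ : SignedSetWord n) :
    weightMatrixHatR n γ σ =
      if srl (List.ofFn σ.1) < srl (List.ofFn γ.1) then 0 else weightMatrixR n γ σ := by
  show ((weightMatrixHat n γ σ : ℤ) : ℝ) = _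
  rw [weightMatrixHat, Matrix.of_apply, ← starRun_def, ← starRun_def]
  split <;> simp [weightMatrixR]

noncomputable def Ef (n : ℕ) : Matrix (SignedSetWord n) (SignedSetWord n) ℝ :=
  Matrix.diagonal fun σ => if firstSign (List.ofFn σ.1) = false then 1 else 0

noncomputable def Et (n : ℕ) : Matrix (SignedSetWord n) (SignedSetWord n) ℝ :=
  Matrix.diagonal fun σ => if firstSign (List.ofFn σ.1) = true then 1 else 0

lemma block_decomp (n : ℕ) (a c : ℝ) :
    (a • weightMatrixR (n + 1) + c • weightMatrixHatR (n + 1)).submatrix (splitE n) (splitE n)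
    = Matrix.fromBlocks
        ((a + c) • weightMatrixHatR n)
        (Matrix.fromCols (-(a • (weightMatrixR n * Ef n))) (-(a • (weightMatrixR n * Et n))))
        (Matrix.fromRows ((a + c) • weightMatrixR n)
          ((a + c) • (weightMatrixR n * (Ef n - Et n))))
        (Matrix.fromBlocks ((a + c) • weightMatrixR n) ((a + c) • weightMatrixR n)
          ((a + c) • weightMatrixR n) (-((a + c) • weightMatrixR n))) := by
  ext i j
  have hlen : ∀ (γ σ : SignedSetWord n),
      srl (List.ofFn (Subtype.val γ)) < (List.ofFn (Subtype.val σ)).length := by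
    intro γ σ; rw [List.length_ofFn]; exact srl_lt_ofFn γ
  rcases i with γ | γ | γ <;> rcases j with σ | σ | σ <;>
    obtain ⟨s, r, hγ⟩ := word_struct γ <;>
    simp only [splitE, Equiv.coe_fn_mk, Sum.elim_inl, Sum.elim_inr, Matrix.submatrix_apply,
      Matrix.add_apply, Matrix.smul_apply, smul_eq_mul, Matrix.fromBlocks_apply₁₁,
      Matrix.fromBlocks_apply₁₂, Matrix.fromBlocks_apply₂₁, Matrix.fromBlocks_apply₂₂,
      Matrix.fromRows_apply_inl, Matrix.fromRows_apply_inr, Matrix.fromCols_apply_inl,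
      Matrix.fromCols_apply_inr, Matrix.neg_apply, Matrix.sub_apply, Matrix.mul_sub,
      Matrix.mul_diagonal, Ef, Et, wR_apply, hatwR_apply, weightMatrixR, weightMatrixHatR,
      weightMatrixHat, weightMatrix, Matrix.of_apply, ← starRun_def, starRun_def,
      ofFn_consW, srl_none, srl_some]
  -- case (none, none)
  · rw [wt_cons_none_none (List.ofFn γ.1) (List.ofFn σ.1) _ s r hγ (hlen γ σ)]
    by_cases h : srl (List.ofFn σ.1) < srl (List.ofFn γ.1)
    · rw [if_pos h, if_pos (by omega : srl (List.ofFn σ.1) + 1 < srl (List.ofFn γ.1) + 1)]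
      erw [if_pos h]
      push_cast; ring
    · rw [if_neg h, if_neg (by omega : ¬(srl (List.ofFn σ.1) + 1 < srl (List.ofFn γ.1) + 1))]
      erw [if_neg h]
      push_cast; ring
  -- case (none, some false)
  · rw [wt_cons_none_some (List.ofFn γ.1) (List.ofFn σ.1) false _ s r hγ (ofFn_ne_nil σ)]
    rw [if_pos (Nat.succ_pos (srl (List.ofFn γ.1)))]
    by_cases h : firstSign (List.ofFn σ.1) = false
    · simp only [if_pos h]
      push_cast; ring
    · simp only [if_neg h]
      push_cast; ring
  -- case (none, some true)
  · rw [wt_cons_none_some (List.ofFn γ.1) (List.ofFn σ.1) true _ s r hγ (ofFn_ne_nil σ)]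
    rw [if_pos (Nat.succ_pos (srl (List.ofFn γ.1)))]
    by_cases h : firstSign (List.ofFn σ.1) = true
    · simp only [if_pos h]
      push_cast; ring
    · simp only [if_neg h]
      push_cast; ring
  -- case (false, none)
  · rw [wt_cons_some false (List.ofFn γ.1) (List.ofFn σ.1) none]
    rw [if_neg (Nat.not_lt_zero _)]
    simp only [Bool.false_and, if_neg (Bool.false_ne_true), pow_zero, one_mul]
    push_cast; ring
  -- case (false, some false)
  · rw [wt_cons_some false (List.ofFn γ.1) (List.ofFn σ.1) (some false)]
    rw [if_neg (Nat.not_lt_zero _)]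
    simp only [Bool.false_and, if_neg (Bool.false_ne_true), pow_zero, one_mul]
    push_cast; ring
  -- case (false, some true)
  · rw [wt_cons_some false (List.ofFn γ.1) (List.ofFn σ.1) (some true)]
    rw [if_neg (Nat.not_lt_zero _)]
    simp only [Bool.false_and, if_neg (Bool.false_ne_true), pow_zero, one_mul]
    push_cast; ring
  -- case (true, none)
  · rw [wt_cons_some true (List.ofFn γ.1) (List.ofFn σ.1) none]
    rw [if_neg (Nat.not_lt_zero _)]
    simp only [Bool.true_and, firstSign_none]
    by_cases h : firstSign (List.ofFn σ.1) = true
    · simp only [if_pos h, if_neg (show ¬(firstSign (List.ofFn σ.1) = false) by rw [h]; simp)]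
      push_cast; ring
    · simp only [if_neg h, if_pos (by simpa using h : firstSign (List.ofFn σ.1) = false)]
      push_cast; ring
  -- case (true, some false)
  · rw [wt_cons_some true (List.ofFn γ.1) (List.ofFn σ.1) (some false)]
    rw [if_neg (Nat.not_lt_zero _)]
    simp only [Bool.true_and, firstSign_some, if_neg (Bool.false_ne_true), pow_zero, one_mul]
    push_cast; ring
  -- case (true, some true)
  · rw [wt_cons_some true (List.ofFn γ.1) (List.ofFn σ.1) (some true)]
    rw [if_neg (Nat.not_lt_zero _)]
    simp only [Bool.true_and, firstSign_some, if_pos rfl, pow_one]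
    push_cast; ring
lemma fromRows_add' {m₁ m₂ n' : Type*} (A₁ B₁ : Matrix m₁ n' ℝ) (A₂ B₂ : Matrix m₂ n' ℝ) :
    Matrix.fromRows A₁ A₂ + Matrix.fromRows B₁ B₂ = Matrix.fromRows (A₁ + B₁) (A₂ + B₂) := by
  ext (i | i) j <;> simp

lemma fromRows_zero' {m₁ m₂ n' : Type*} :
    (Matrix.fromRows (0 : Matrix m₁ n' ℝ) (0 : Matrix m₂ n' ℝ)) = 0 := by
  ext (i | i) j <;> simp

lemma Ef_mul_Ef (n : ℕ) : Ef n * Ef n = Ef n := by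
  rw [Ef, Matrix.diagonal_mul_diagonal]
  apply congrArg Matrix.diagonal
  funext σ
  by_cases h : firstSign (List.ofFn σ.1) = false <;> simp only [h] <;> norm_num

lemma Et_mul_Et (n : ℕ) : Et n * Et n = Et n := by
  rw [Et, Matrix.diagonal_mul_diagonal]
  apply congrArg Matrix.diagonal
  funext σ
  by_cases h : firstSign (List.ofFn σ.1) = true <;> simp only [h] <;> norm_num

lemma Ef_add_Et (n : ℕ) : Ef n + Et n = 1 := by
  rw [Ef, Et, Matrix.diagonal_add, ← Matrix.diagonal_one]
  apply congrArg Matrix.diagonal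
  funext σ
  cases h : firstSign (List.ofFn σ.1) <;> simp only [h] <;> norm_num

lemma det_step (n : ℕ) (a c : ℝ) :
    (a • weightMatrixR (n + 1) + c • weightMatrixHatR (n + 1)).det
      = ((a + c) ^ Fintype.card (SignedSetWord n) * (weightMatrixR n).det)
        * ((-2 * (a + c)) ^ Fintype.card (SignedSetWord n) * (weightMatrixR n).det)
        * (a • weightMatrixR n + (a + c) • weightMatrixHatR n).det := by
  classical
  have hEf := Ef_mul_Ef n
  have hEt := Et_mul_Et n
  have hadd := Ef_add_Et n
  set A := weightMatrixR n with hA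
  set H := weightMatrixHatR n with hH
  set Q : Matrix (SignedSetWord n) (SignedSetWord n) ℝ := (a + c) • A with hQ
  set K : Matrix (SignedSetWord n ⊕ SignedSetWord n) (SignedSetWord n) ℝ :=
    Matrix.fromRows (-(Ef n)) (-(Et n)) with hK
  set L : Matrix (SignedSetWord n ⊕ SignedSetWord n) (SignedSetWord n ⊕ SignedSetWord n) ℝ :=
    Matrix.fromBlocks 1 (-1) 0 1 with hL
  have hdetV : (Matrix.fromBlocks (1 : Matrix (SignedSetWord n) (SignedSetWord n) ℝ) 0 K L).det = 1 := by
    rw [Matrix.det_fromBlocks_zero₁₂, hL, Matrix.det_fromBlocks_zero₂₁]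
    simp
  rw [← Matrix.det_submatrix_equiv_self (splitE n), block_decomp]
  have key : ∀ (X : Matrix (SignedSetWord n ⊕ (SignedSetWord n ⊕ SignedSetWord n))
      (SignedSetWord n ⊕ (SignedSetWord n ⊕ SignedSetWord n)) ℝ),
      X.det = (X * Matrix.fromBlocks 1 0 K L).det := by
    intro X
    rw [Matrix.det_mul, hdetV, mul_one]
  rw [key, Matrix.fromBlocks_multiply]
  have e11 : (a + c) • H * 1 + Matrix.fromCols (-(a • (A * Ef n))) (-(a • (A * Et n))) * K
      = a • A + (a + c) • H := by
    rw [Matrix.mul_one, hK, Matrix.fromCols_mul_fromRows, neg_mul_neg, neg_mul_neg,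
      smul_mul_assoc, smul_mul_assoc, mul_assoc, mul_assoc, hEf, hEt, ← smul_add,
      ← mul_add, hadd, mul_one]
    exact add_comm _ _
  have e21 : Matrix.fromRows Q ((a + c) • (A * (Ef n - Et n)))
        * (1 : Matrix (SignedSetWord n) (SignedSetWord n) ℝ)
      + Matrix.fromBlocks Q Q Q (-Q) * K = 0 := by
    rw [Matrix.mul_one, hK, Matrix.fromBlocks_mul_fromRows, fromRows_add']
    rw [show Q + (Q * -Ef n + Q * -Et n) = 0 from by
      rw [mul_neg, mul_neg, ← neg_add, ← mul_add, hadd, mul_one]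
      exact add_neg_cancel Q]
    rw [show (a + c) • (A * (Ef n - Et n)) + (Q * -Ef n + -Q * -Et n) = 0 from by
      rw [mul_neg, neg_mul_neg, hQ, smul_mul_assoc, smul_mul_assoc, mul_sub, smul_sub]
      abel]
    exact fromRows_zero'
  have e22 : Matrix.fromRows Q ((a + c) • (A * (Ef n - Et n)))
        * (0 : Matrix (SignedSetWord n) (SignedSetWord n ⊕ SignedSetWord n) ℝ)
      + Matrix.fromBlocks Q Q Q (-Q) * L = Matrix.fromBlocks Q 0 Q ((-2 * (a + c)) • A) := by
    have hQQ : -Q + -Q = (-2 * (a + c)) • A := by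
      rw [hQ, ← neg_smul, ← add_smul]
      congr 1
      ring
    rw [Matrix.mul_zero, zero_add, hL, Matrix.fromBlocks_multiply]
    simp only [mul_one, mul_zero, add_zero, mul_neg_one, neg_add_cancel]
    rw [hQQ]
  rw [e11, e21, e22, Matrix.det_fromBlocks_zero₂₁, Matrix.det_fromBlocks_zero₁₂, hQ,
    Matrix.det_smul, Matrix.det_smul]
  ring
noncomputable def Fprod (n : ℕ) (a c : ℝ) : ℝ :=
  - ∏ γ : SignedSetWord n,
      (Real.sqrt 2) ^ (partSizes γ).length
        * (a * ((partSizes γ).headI : ℝ) + c)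
        * (((partSizes γ).tail.prod : ℕ) : ℝ)

lemma Fprod_rec (n : ℕ) (a c : ℝ) :
    Fprod (n + 1) a c
      = ((a + c) ^ Fintype.card (SignedSetWord n) * Fprod n 1 0)
        * ((-2 * (a + c)) ^ Fintype.card (SignedSetWord n) * Fprod n 1 0)
        * Fprod n a (a + c) := by
  classical
  have hEven : Even (Fintype.card (SignedSetWord n)) := even_card_word n
  have hss : Real.sqrt 2 * Real.sqrt 2 = 2 := Real.mul_self_sqrt (by norm_num)
  have hnone : ∀ w : SignedSetWord n,
      (Real.sqrt 2) ^ (partSizes (consW none w)).length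
          * (a * ((partSizes (consW none w)).headI : ℝ) + c)
          * (((partSizes (consW none w)).tail.prod : ℕ) : ℝ)
      = (Real.sqrt 2) ^ (partSizes w).length
          * (a * ((partSizes w).headI : ℝ) + (a + c))
          * (((partSizes w).tail.prod : ℕ) : ℝ) := by
    intro w
    obtain ⟨s, r, hw⟩ := word_struct w
    have h1 : partSizes (consW none w) = (srl (List.ofFn w.1) + 1 + 1) :: r.map Prod.fst := by
      rw [partSizes, ofFn_consW, compOfWord_none _ _ s r hw, List.map_cons]
    have h2 : partSizes w = (srl (List.ofFn w.1) + 1) :: r.map Prod.fst := by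
      rw [partSizes, hw, List.map_cons]
    rw [h1, h2]
    simp only [List.length_cons, List.headI, List.tail_cons]
    push_cast
    ring
  have hsome : ∀ (b : Bool) (w : SignedSetWord n),
      (Real.sqrt 2) ^ (partSizes (consW (some b) w)).length
          * (a * ((partSizes (consW (some b) w)).headI : ℝ) + c)
          * (((partSizes (consW (some b) w)).tail.prod : ℕ) : ℝ)
      = (Real.sqrt 2 * (a * 1 + c))
        * ((Real.sqrt 2) ^ (partSizes w).length
          * (1 * ((partSizes w).headI : ℝ) + 0)
          * (((partSizes w).tail.prod : ℕ) : ℝ)) := by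
    intro b w
    obtain ⟨s, r, hw⟩ := word_struct w
    have h1 : partSizes (consW (some b) w) = 1 :: partSizes w := by
      rw [partSizes, ofFn_consW, compOfWord_some, List.map_cons, partSizes]
    have h2 : partSizes w = (srl (List.ofFn w.1) + 1) :: r.map Prod.fst := by
      rw [partSizes, hw, List.map_cons]
    rw [h1, h2]
    simp only [List.length_cons, List.headI, List.tail_cons, List.prod_cons]
    push_cast
    ring
  rw [Fprod, ← Equiv.prod_comp (splitE n), Fintype.prod_sum_type, Fintype.prod_sum_type]
  simp only [splitE, Equiv.coe_fn_mk, Sum.elim_inl, Sum.elim_inr]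
  rw [Finset.prod_congr rfl (fun w _ => hnone w),
    Finset.prod_congr rfl (fun w _ => hsome false w),
    Finset.prod_congr rfl (fun w _ => hsome true w)]
  rw [show (∏ w : SignedSetWord n,
      Real.sqrt 2 * (a * 1 + c) * ((Real.sqrt 2) ^ (partSizes w).length
        * (1 * ((partSizes w).headI : ℝ) + 0) * (((partSizes w).tail.prod : ℕ) : ℝ)))
    = (Real.sqrt 2 * (a * 1 + c)) ^ Fintype.card (SignedSetWord n)
      * ∏ w : SignedSetWord n, (Real.sqrt 2) ^ (partSizes w).length
        * (1 * ((partSizes w).headI : ℝ) + 0) * (((partSizes w).tail.prod : ℕ) : ℝ) from by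
    rw [Finset.prod_mul_distrib, Finset.prod_const, Finset.card_univ]]
  rw [Fprod, Fprod]
  rw [show (-2 * (a + c) : ℝ) = -(2 * (a + c)) by ring, hEven.neg_pow, mul_pow, mul_pow]
  set N := Fintype.card (SignedSetWord n) with hN
  set P1 := ∏ w : SignedSetWord n,
      (Real.sqrt 2) ^ (partSizes w).length * (1 * ((partSizes w).headI : ℝ) + 0)
        * (((partSizes w).tail.prod : ℕ) : ℝ) with hP1
  set P2 := ∏ w : SignedSetWord n,
      (Real.sqrt 2) ^ (partSizes w).length * (a * ((partSizes w).headI : ℝ) + (a + c))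
        * (((partSizes w).tail.prod : ℕ) : ℝ) with hP2
  have h2N : (Real.sqrt 2) ^ N * (Real.sqrt 2) ^ N = 2 ^ N := by
    rw [← mul_pow, hss]
  linear_combination (-(P2 * P1 * P1 * (a + c) ^ N * (a + c) ^ N)) * h2N
lemma hatR_zero : weightMatrixHatR 0 = weightMatrixR 0 := by
  ext γ σ
  rw [hatwR_apply]
  have h1 : srl (List.ofFn σ.1) = 0 := Nat.lt_one_iff.mp (srl_lt_ofFn σ)
  have h2 : srl (List.ofFn γ.1) = 0 := Nat.lt_one_iff.mp (srl_lt_ofFn γ)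
  rw [h1, h2, if_neg (lt_irrefl 0)]

lemma word_base (b : Bool) : List.ofFn ((baseEquiv b).1) = [some b] := by
  simp [baseEquiv, List.ofFn_succ]
  rfl

lemma main_det (n : ℕ) : ∀ a c : ℝ,
    (a • weightMatrixR n + c • weightMatrixHatR n).det = Fprod n a c := by
  induction n with
  | zero =>
    intro a c
    have hss : Real.sqrt 2 * Real.sqrt 2 = 2 := Real.mul_self_sqrt (by norm_num)
    have hentry : ∀ b b' : Bool,
        (a • weightMatrixR 0 + c • weightMatrixHatR 0) (baseEquiv b) (baseEquiv b')
          = (a + c) * (if b && b' then -1 else 1) := by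
      intro b b'
      rw [hatR_zero]
      simp only [Matrix.add_apply, Matrix.smul_apply, smul_eq_mul, wR_apply, word_base]
      rw [show ([some b] : List (Option Bool)) = some b :: [] from rfl,
        show ([some b'] : List (Option Bool)) = some b' :: [] from rfl,
        wt_cons_some]
      cases b <;> cases b' <;> simp [wt, compOfWord, firstSign] <;> ring
    rw [← Matrix.det_submatrix_equiv_self (finTwoEquiv.trans baseEquiv), Matrix.det_fin_two]
    simp only [Matrix.submatrix_apply, Equiv.trans_apply]
    rw [show (finTwoEquiv 0) = false from rfl, show (finTwoEquiv 1) = true from rfl]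
    rw [hentry, hentry, hentry, hentry]
    rw [Fprod, ← Equiv.prod_comp baseEquiv, Fintype.prod_bool]
    have hps : ∀ b : Bool, partSizes (baseEquiv b) = [1] := by
      intro b
      rw [partSizes, word_base]
      rfl
    rw [hps, hps]
    norm_num
    linear_combination ((a + c) * (a + c)) * hss
  | succ n ih =>
    intro a c
    rw [det_step n a c, ih a (a + c)]
    have hA : (weightMatrixR n).det = Fprod n 1 0 := by
      have h := ih 1 0
      rwa [one_smul, zero_smul, add_zero] at h
    rw [hA, Fprod_rec n a c]


/-- For every real `α` and every positive integer `n` (here `A_n = weightMatrix (n-1)`,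
i.e. `weightMatrix m = A_{m+1}`),
`det(αA_n + (1−α)Â_n) = − Π_{γ ∈ Comp^B(n)} m_γ(α)`, where for a signed composition
`γ` with part sizes `γ₁, ..., γ_k`,
`m_γ(α) = 2^{k/2} · (αγ₁ + (1−α)) · Π_{i=2}^{k} γ_i`. -/
theorem weightMatrix_det_alpha (α : ℝ) (n : ℕ) :
    (α • weightMatrixR n + (1 - α) • weightMatrixHatR n).det
      = - ∏ γ : SignedSetWord n,
          (Real.sqrt 2) ^ (partSizes γ).length
            * (α * ((partSizes γ).headI : ℝ) + (1 - α))
            * (((partSizes γ).tail.prod : ℕ) : ℝ) := by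
  have h := main_det n α (1 - α)
  rw [Fprod] at h
  exact h
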